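/- Let q be a prime power, H = 𝔽_{q³}(T), σ the q-Frobenius automorphism of H over F = 𝔽_q(T), and take π = T. For every β ∈ 𝔽_{q³} with β^{1+q+q²} = 1, the matrix M_{(0,β,0)} = [[0, β, 0], [0, 0, σ(β)], [Tσ²(β), 0, 0]] satisfies M_{(0,β,0)}³ = T·I₃. Consequently the set {(x_1,x_2,x_3) ∈ 𝔽_{q³}[T]³ : M_{(x_1,x_2,x_3)}³ = T·I₃} has at least q² + q + 1 elements. -/

import Mathlib

/-- The twisted matrix `M_{(x₁,x₂,x₃)}` of the paper (rank `3`), over a commutative ring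
with a ring endomorphism `σ` and parameter `π`. -/
noncomputable def M3 {R : Type*} [CommRing R] (σ : R →+* R) (π x₁ x₂ x₃ : R) :
    Matrix (Fin 3) (Fin 3) R :=
  !![x₁, x₂, x₃;
     π * σ x₃, σ x₁, σ x₂;
     π * σ (σ x₂), π * σ (σ x₃), σ (σ x₁)]

open Polynomial in
/-- Section 5.1: for `β ∈ 𝔽_{q³}` of norm `1`, the matrix `M_{(0,β,0)}` (with `π = T` and
`σ` the coefficientwise `q`-Frobenius of `𝔽_{q³}[T]`) satisfies `M³ = T·I₃`; hence the set
of triples `(x₁,x₂,x₃) ∈ 𝔽_{q³}[T]³` with `M_{(x₁,x₂,x₃)}³ = T·I₃` has at least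
`q² + q + 1` elements. -/
theorem stmt14 (p : ℕ) (hp : p.Prime) (e : ℕ) (he : 0 < e) (q : ℕ) (hq : q = p ^ e)
    (Fqr : Type) [Field Fqr] [Fintype Fqr] (hcard : Fintype.card Fqr = q ^ 3)
    (σ₀ : Fqr →+* Fqr) (hσ₀ : ∀ a : Fqr, σ₀ a = a ^ q) :
    (∀ β : Fqr, β ^ (1 + q + q ^ 2) = 1 →
        (M3 (Polynomial.mapRingHom σ₀) (X : Polynomial Fqr) 0 (C β) 0) ^ 3
          = (X : Polynomial Fqr) • (1 : Matrix (Fin 3) (Fin 3) (Polynomial Fqr))) ∧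
      ((q ^ 2 + q + 1 : ℕ) : ℕ∞) ≤
        {x : Polynomial Fqr × Polynomial Fqr × Polynomial Fqr |
          (M3 (Polynomial.mapRingHom σ₀) (X : Polynomial Fqr) x.1 x.2.1 x.2.2) ^ 3
            = (X : Polynomial Fqr) • (1 : Matrix (Fin 3) (Fin 3) (Polynomial Fqr))}.encard := by
  have part1 : ∀ β : Fqr, β ^ (1 + q + q ^ 2) = 1 →
      (M3 (Polynomial.mapRingHom σ₀) (X : Polynomial Fqr) 0 (C β) 0) ^ 3
        = (X : Polynomial Fqr) • (1 : Matrix (Fin 3) (Fin 3) (Polynomial Fqr)) := by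
    intro β hβ
    have key : (C β : Polynomial Fqr) * C (σ₀ β) * C (σ₀ (σ₀ β)) = 1 := by
      rw [hσ₀, hσ₀, ← C_mul, ← C_mul, ← pow_mul, ← pow_succ', ← pow_add,
        show q + 1 + q * q = 1 + q + q ^ 2 by ring, hβ, map_one]
    have h1 : (Polynomial.mapRingHom σ₀) (C β) = C (σ₀ β) := by simp
    have h0 : (Polynomial.mapRingHom σ₀) (0 : Polynomial Fqr) = 0 := by simp
    rw [M3, h0, pow_succ, pow_two]
    rw [Matrix.mul_fin_three, Matrix.mul_fin_three]
    simp only [h1, h0, map_mul, map_zero, mul_zero, zero_mul, add_zero, zero_add, mul_one]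
    refine Matrix.ext fun i j => ?_
    fin_cases i <;> fin_cases j <;>
      simp [Matrix.one_apply, Matrix.vecHead, Matrix.vecTail] <;> linear_combination (X : Polynomial Fqr) * key
  refine ⟨part1, ?_⟩
  classical
  -- counting part
  set n : ℕ := q ^ 2 + q + 1 with hn
  have hq2 : 2 ≤ q := hq ▸ hp.two_le.trans (Nat.le_self_pow he.ne' p)
  have hn0 : 0 < n := by positivity
  have hdvd : n ∣ Nat.card Fqrˣ := by
    rw [Nat.card_eq_fintype_card, Fintype.card_units, hcard]
    refine ⟨q - 1, ?_⟩
    have h1 : 1 ≤ q := by omega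
    have h3 : 1 ≤ q ^ 3 := Nat.one_le_pow _ _ (by omega)
    zify [h1, h3]
    rw [hn]; push_cast; ring
  obtain ⟨g, hg⟩ := IsCyclic.exists_ofOrder_eq_natCard (α := Fqrˣ)
  have hord : orderOf g ≠ 0 := by
    rw [hg, Nat.card_eq_fintype_card]; exact Fintype.card_ne_zero
  have hζ : orderOf (g ^ (orderOf g / n)) = n :=
    orderOf_pow_orderOf_div hord (hg ▸ hdvd)
  have hζ' : IsPrimitiveRoot ((g ^ (orderOf g / n) : Fqrˣ) : Fqr) n := by
    have := IsPrimitiveRoot.orderOf (g ^ (orderOf g / n))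
    rw [hζ] at this
    exact IsPrimitiveRoot.coe_units_iff.mpr this
  have hcardS : (Polynomial.nthRootsFinset n (1 : Fqr)).card = n := hζ'.card_nthRootsFinset
  -- injection
  set f : Fqr → Polynomial Fqr × Polynomial Fqr × Polynomial Fqr :=
    fun β => (0, C β, 0) with hf
  have hinj : Function.Injective f := by
    intro a b hab
    simpa [hf, C_inj] using hab
  have hsub : f '' ↑(Polynomial.nthRootsFinset n (1 : Fqr)) ⊆
      {x : Polynomial Fqr × Polynomial Fqr × Polynomial Fqr |
        (M3 (Polynomial.mapRingHom σ₀) (X : Polynomial Fqr) x.1 x.2.1 x.2.2) ^ 3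
          = (X : Polynomial Fqr) • (1 : Matrix (Fin 3) (Fin 3) (Polynomial Fqr))} := by
    rintro _ ⟨β, hβ, rfl⟩
    have hβ1 : β ^ (1 + q + q ^ 2) = 1 := by
      have := (Polynomial.mem_nthRootsFinset hn0 (1 : Fqr)).mp hβ
      rwa [show 1 + q + q ^ 2 = n by omega]
    exact part1 β hβ1
  calc ((n : ℕ) : ℕ∞) = (↑(Polynomial.nthRootsFinset n (1 : Fqr)) : Set Fqr).encard := by
        rw [Set.encard_coe_eq_coe_finsetCard, hcardS]
    _ = (f '' ↑(Polynomial.nthRootsFinset n (1 : Fqr))).encard :=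
        (Set.InjOn.encard_image (hinj.injOn)).symm
    _ ≤ _ := Set.encard_le_encard hsub
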